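/- (Binet–Fibonacci binomial formula) If y x = φ x y in an algebra over the reals, where φ is the golden ratio, then (x+y)(x - φ^{-1} y)(x + φ^{-2} y)···(x + (-1/φ)^{n-1} y) = sum_{k=0}^n (F_n!/(F_k! F_{n-k}!)) (-1/φ)^{k(k-1)/2} x^{n-k} y^k, where F_m are Fibonacci numbers. -/

import Mathlib

/-- The Fibonacci factorial `F_n! = F_1 F_2 ⋯ F_n` (as a real number). -/
noncomputable def fibFac : ℕ → ℝ
  | 0 => 1
  | n + 1 => fibFac n * (Nat.fib (n + 1) : ℝ)

/-- The ordered q-binomial power `(x+y)^n_{<q} = (x+y)(x+qy)⋯(x+q^{n-1}y)`. -/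
def ascBinom {A : Type*} [Ring A] [Algebra ℝ A] (x y : A) (q : ℝ) : ℕ → A
  | 0 => 1
  | n + 1 => ascBinom x y q n * (x + q ^ n • y)

section Aux

open Finset Real goldenRatio

private lemma fibFac_succ (n : ℕ) : fibFac (n + 1) = fibFac n * (Nat.fib (n + 1) : ℝ) := rfl

private lemma fibFac_pos : ∀ n, 0 < fibFac n
  | 0 => one_pos
  | n + 1 => mul_pos (fibFac_pos n) (by exact_mod_cast Nat.fib_pos.2 n.succ_pos)

private lemma tri_succ (j : ℕ) : (j + 1) * j / 2 = j * (j - 1) / 2 + j := by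
  cases j with
  | zero => rfl
  | succ i =>
    have h : (i + 1 + 1) * (i + 1) = (i + 1) * i + (i + 1) * 2 := by ring
    rw [h, Nat.add_mul_div_right _ _ (by norm_num : (0:ℕ) < 2)]
    simp

private lemma fib_split (k m : ℕ) :
    (Nat.fib (k + m) : ℝ) = φ ^ k * Nat.fib m + ψ ^ m * Nat.fib k := by
  have h5 : (√5 : ℝ) ≠ 0 := by positivity
  rw [Real.coe_fib_eq, Real.coe_fib_eq, Real.coe_fib_eq, pow_add, pow_add]
  field_simp
  ring

private lemma coeff_rec (n j : ℕ) (h : j + 1 ≤ n) :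
    fibFac (n + 1) / (fibFac (j + 1) * fibFac (n + 1 - (j + 1))) * ψ ^ ((j + 1) * j / 2)
      = φ ^ (j + 1) * (fibFac n / (fibFac (j + 1) * fibFac (n - (j + 1))) * ψ ^ ((j + 1) * j / 2))
        + ψ ^ n * (fibFac n / (fibFac j * fibFac (n - j)) * ψ ^ (j * (j - 1) / 2)) := by
  obtain ⟨m, rfl⟩ : ∃ m, n = j + 1 + m := ⟨n - (j + 1), by omega⟩
  simp only [show j + 1 + m + 1 - (j + 1) = m + 1 from by omega,
    show j + 1 + m - (j + 1) = m from by omega,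
    show j + 1 + m - j = m + 1 from by omega]
  rw [fibFac_succ (j + 1 + m), fibFac_succ m, fibFac_succ j,
    show j + 1 + m + 1 = (j + 1) + (m + 1) from by omega, fib_split (j + 1) (m + 1),
    tri_succ j]
  have hA := (fibFac_pos j).ne'
  have hB := (fibFac_pos m).ne'
  have ha : (Nat.fib (j + 1) : ℝ) ≠ 0 := by
    exact_mod_cast (Nat.fib_pos.2 j.succ_pos).ne'
  have hb : (Nat.fib (m + 1) : ℝ) ≠ 0 := by
    exact_mod_cast (Nat.fib_pos.2 m.succ_pos).ne'
  field_simp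
  ring

private lemma ypow_mul {A : Type*} [Ring A] [Algebra ℝ A] (c : ℝ) (x y : A)
    (hyx : y * x = c • (x * y)) (k : ℕ) : y ^ k * x = c ^ k • (x * y ^ k) := by
  induction k with
  | zero => simp
  | succ k ih =>
    calc y ^ (k + 1) * x = y ^ k * (y * x) := by rw [pow_succ, mul_assoc]
      _ = y ^ k * (c • (x * y)) := by rw [hyx]
      _ = c • (y ^ k * x * y) := by rw [mul_smul_comm, mul_assoc]
      _ = c • ((c ^ k • (x * y ^ k)) * y) := by rw [ih]
      _ = c ^ (k + 1) • (x * y ^ (k + 1)) := by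
          rw [smul_mul_assoc, smul_smul, mul_assoc, ← pow_succ, ← pow_succ']

private lemma key {A : Type*} [Ring A] [Algebra ℝ A] (x y : A)
    (hyx : y * x = (φ : ℝ) • (x * y)) (n : ℕ) :
    ascBinom x y ψ n
      = ∑ k ∈ Finset.range (n + 1),
          (fibFac n / (fibFac k * fibFac (n - k)) * ψ ^ (k * (k - 1) / 2)) •
            (x ^ (n - k) * y ^ k) := by
  induction n with
  | zero => simp [ascBinom, fibFac]
  | succ n ih =>
    have hterm : ∀ k ∈ Finset.range (n + 1),
        ((fibFac n / (fibFac k * fibFac (n - k)) * ψ ^ (k * (k - 1) / 2)) •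
            (x ^ (n - k) * y ^ k)) * (x + ψ ^ n • y)
          = (φ ^ k * (fibFac n / (fibFac k * fibFac (n - k)) * ψ ^ (k * (k - 1) / 2))) •
              (x ^ (n + 1 - k) * y ^ k)
            + (ψ ^ n * (fibFac n / (fibFac k * fibFac (n - k)) * ψ ^ (k * (k - 1) / 2))) •
              (x ^ (n - k) * y ^ (k + 1)) := by
      intro k hk
      have hk' : k ≤ n := Finset.mem_range_succ_iff.mp hk
      have h1 : x ^ (n - k) * y ^ k * x = φ ^ k • (x ^ (n + 1 - k) * y ^ k) := by
        rw [mul_assoc, ypow_mul φ x y hyx k, mul_smul_comm, ← mul_assoc, ← pow_succ,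
          show n - k + 1 = n + 1 - k from by omega]
      have h2 : x ^ (n - k) * y ^ k * y = x ^ (n - k) * y ^ (k + 1) := by
        rw [mul_assoc, ← pow_succ]
      rw [mul_add, smul_mul_assoc, smul_mul_assoc, h1, mul_smul_comm, h2, smul_smul,
        smul_smul]
      ring_nf
    rw [ascBinom, ih, Finset.sum_mul, Finset.sum_congr rfl hterm, Finset.sum_add_distrib]
    rw [Finset.sum_range_succ' (fun k =>
      (fibFac (n+1) / (fibFac k * fibFac (n + 1 - k)) * ψ ^ (k * (k - 1) / 2)) •
        (x ^ (n + 1 - k) * y ^ k)) (n + 1)]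
    rw [Finset.sum_range_succ' (fun k =>
      (φ ^ k * (fibFac n / (fibFac k * fibFac (n - k)) * ψ ^ (k * (k - 1) / 2))) •
        (x ^ (n + 1 - k) * y ^ k)) n]
    rw [Finset.sum_range_succ (fun k =>
      (ψ ^ n * (fibFac n / (fibFac k * fibFac (n - k)) * ψ ^ (k * (k - 1) / 2))) •
        (x ^ (n - k) * y ^ (k + 1))) n]
    rw [Finset.sum_range_succ (fun j =>
      (fibFac (n+1) / (fibFac (j+1) * fibFac (n + 1 - (j+1))) * ψ ^ ((j+1) * ((j+1) - 1) / 2)) •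
        (x ^ (n + 1 - (j+1)) * y ^ (j+1))) n]
    have hzero : (fibFac (n+1) / (fibFac 0 * fibFac (n + 1 - 0)) * ψ ^ (0 * (0 - 1) / 2)) •
        (x ^ (n + 1 - 0) * y ^ 0)
        = (φ ^ 0 * (fibFac n / (fibFac 0 * fibFac (n - 0)) * ψ ^ (0 * (0 - 1) / 2))) •
          (x ^ (n + 1 - 0) * y ^ 0) := by
      have h1 := (fibFac_pos (n+1)).ne'
      have h2 := (fibFac_pos n).ne'
      simp only [Nat.sub_zero, pow_zero, one_mul, pow_zero,
        show fibFac 0 = (1:ℝ) from rfl]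
      rw [div_self h1, div_self h2]
    have hlast : (fibFac (n+1) / (fibFac (n+1) * fibFac (n + 1 - (n+1))) *
          ψ ^ ((n+1) * ((n+1) - 1) / 2)) • (x ^ (n + 1 - (n+1)) * y ^ (n+1))
        = (ψ ^ n * (fibFac n / (fibFac n * fibFac (n - n)) * ψ ^ (n * (n - 1) / 2))) •
          (x ^ (n - n) * y ^ (n + 1)) := by
      have h1 := (fibFac_pos (n+1)).ne'
      have h2 := (fibFac_pos n).ne'
      simp only [Nat.sub_self, Nat.add_sub_cancel]
      show (fibFac (n+1) / (fibFac (n+1) * fibFac 0) * ψ ^ ((n+1) * n / 2)) • (x ^ 0 * y ^ (n+1))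
        = (ψ ^ n * (fibFac n / (fibFac n * fibFac 0) * ψ ^ (n * (n - 1) / 2))) •
          (x ^ 0 * y ^ (n + 1))
      congr 1
      show fibFac (n+1) / (fibFac (n+1) * 1) * ψ ^ ((n+1) * n / 2)
        = ψ ^ n * (fibFac n / (fibFac n * 1) * ψ ^ (n * (n - 1) / 2))
      rw [mul_one, mul_one, div_self h1, div_self h2, tri_succ n, pow_add]
      ring
    have hmid : ∀ j ∈ Finset.range n,
        (fibFac (n+1) / (fibFac (j+1) * fibFac (n + 1 - (j+1))) * ψ ^ ((j+1) * ((j+1) - 1) / 2)) •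
          (x ^ (n + 1 - (j+1)) * y ^ (j+1))
        = (φ ^ (j+1) * (fibFac n / (fibFac (j+1) * fibFac (n - (j+1))) * ψ ^ ((j+1) * ((j+1) - 1) / 2))) •
            (x ^ (n + 1 - (j+1)) * y ^ (j+1))
          + (ψ ^ n * (fibFac n / (fibFac j * fibFac (n - j)) * ψ ^ (j * (j - 1) / 2))) •
            (x ^ (n - j) * y ^ (j + 1)) := by
      intro j hj
      have hj' : j + 1 ≤ n := Finset.mem_range.mp hj
      have := coeff_rec n j hj'
      rw [show (j + 1) - 1 = j from rfl]
      rw [show n + 1 - (j + 1) = n - j from by omega] at *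
      rw [this, add_smul]
    rw [Finset.sum_congr rfl hmid, Finset.sum_add_distrib, hzero, hlast]
    abel

end Aux

/-- Binet–Fibonacci binomial formula: if `y x = φ (x y)` with `φ`
    the golden ratio, then
    `(x+y)(x-φ⁻¹y)(x+φ⁻²y)⋯(x+(-1/φ)^{n-1}y)
       = ∑_{k=0}^n (F_n!/(F_k!F_{n-k}!)) (-1/φ)^{k(k-1)/2} x^{n-k} y^k`. -/
theorem binet_fibonacci_binomial {A : Type*} [Ring A] [Algebra ℝ A]
    (φ : ℝ) (hφ : φ = (1 + Real.sqrt 5) / 2)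
    (x y : A) (hyx : y * x = φ • (x * y)) (n : ℕ) :
    ascBinom x y (-1 / φ) n
      = ∑ k ∈ Finset.range (n + 1),
          (fibFac n / (fibFac k * fibFac (n - k)) * (-1 / φ) ^ (k * (k - 1) / 2)) •
            (x ^ (n - k) * y ^ k) := by
  have hg : φ = Real.goldenRatio := hφ
  have hq : -1 / φ = Real.goldenConj := by
    rw [hg, div_eq_iff Real.goldenRatio_ne_zero]
    exact Real.goldenConj_mul_goldenRatio.symm
  rw [hg] at hyx
  rw [hq]
  exact _root_.key x y hyx n
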